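/- Let p ≥ 1 and let x_i (i ∈ ℤ) be a p-periodic sequence in a commutative ring. Writing X_j^{(n)} = P_n(x_j, x_{j+1}, …, x_{j+n−1}), the following identity holds for all l ≥ 1: X_0^{(lp−1)}·X_1^{(p−1)} = X_0^{(p−1)}·X_1^{(lp−1)}. -/

import Mathlib

/-- Generalized Chebyshev polynomial on the window `x j, x (j+1), …, x (j+n-1)`
of a bi-infinite sequence: `Pz x j n = P_n(x_j, …, x_{j+n−1})`. -/
def Pz {R : Type*} [CommRing R] (x : ℤ → R) (j : ℤ) : ℕ → R
  | 0 => 1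
  | 1 => x j
  | (n + 2) => x (j + (n + 1)) * Pz x j (n + 1) - Pz x j n


lemma Pz_step {R : Type*} [CommRing R] (x : ℤ → R) (j : ℤ) (n : ℕ) :
    Pz x j (n+2) = x (j + (n+1)) * Pz x j (n+1) - Pz x j n := rfl

lemma Pz_split {R : Type*} [CommRing R] (x : ℤ → R) :
    ∀ (n m : ℕ) (j : ℤ), Pz x j (m+n+2) =
      Pz x j (m+1) * Pz x (j+m+1) (n+1) - Pz x j m * Pz x (j+m+2) n := by
  intro n
  induction n using Nat.twoStepInduction with
  | zero =>
    intro m j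
    rw [Pz_step]
    simp only [Pz]
    ring_nf
  | one =>
    intro m j
    rw [show m + 1 + 2 = (m+1)+2 from rfl, Pz_step, Pz_step]
    simp only [Pz]
    push_cast
    ring_nf
  | more n ih1 ih2 =>
    intro m j
    rw [show m + (n+2) + 2 = (m+n+2)+2 by omega, Pz_step,
      show m+n+2+1 = m+(n+1)+2 by omega, ih2, ih1,
      show (n+2:ℕ)+1 = (n+1)+2 by omega]
    simp only [Pz_step, show (n+1:ℕ)+2 = n+1+2 by omega]
    push_cast
    ring_nf

lemma Pz_det {R : Type*} [CommRing R] (x : ℤ → R) :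
    ∀ (n : ℕ) (j : ℤ), Pz x j (n+2) * Pz x (j+1) n - Pz x j (n+1) * Pz x (j+1) (n+1) = -1 := by
  intro n
  induction n with
  | zero => intro j; simp only [Pz]; push_cast; ring_nf
  | succ n ih =>
    intro j
    have h1 : Pz x j (n+1+2) = x (j + ((n:ℤ)+2)) * Pz x j (n+2) - Pz x j (n+1) := by
      rw [Pz_step, show j + ((↑(n+1):ℤ)+1) = j + ((n:ℤ)+2) by push_cast; ring]
    have h2 : Pz x (j+1) (n+2) = x (j + ((n:ℤ)+2)) * Pz x (j+1) (n+1) - Pz x (j+1) n := by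
      rw [Pz_step, show j + 1 + ((n:ℤ)+1) = j + ((n:ℤ)+2) by ring]
    rw [h1, h2]
    linear_combination ih j

lemma Pz_per {R : Type*} [CommRing R] (p : ℕ) (x : ℤ → R)
    (hper : ∀ i : ℤ, x (i + p) = x i) :
    ∀ (n : ℕ) (j : ℤ), Pz x (j + p) n = Pz x j n := by
  intro n
  induction n using Nat.twoStepInduction with
  | zero => intro j; simp [Pz]
  | one => intro j; simp [Pz, hper]
  | more n ih1 ih2 =>
    intro j
    rw [Pz_step, Pz_step, ih1, ih2,
      show j + ↑p + (↑n + 1) = (j + (↑n+1)) + ↑p by ring, hper]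

lemma Pz_per_mul {R : Type*} [CommRing R] (p : ℕ) (x : ℤ → R)
    (hper : ∀ i : ℤ, x (i + p) = x i) (k : ℕ) :
    ∀ (n : ℕ) (j : ℤ), Pz x (j + k * p) n = Pz x j n := by
  induction k with
  | zero => simp
  | succ k ih =>
    intro n j
    push_cast
    rw [show j + ((k:ℤ)+1) * ↑p = (j + (k:ℤ) * ↑p) + ↑p by ring, Pz_per p x hper]
    exact ih n j

lemma Pz_left {R : Type*} [CommRing R] (x : ℤ → R) (n : ℕ) (j : ℤ) :
    Pz x j (n+2) = x j * Pz x (j+1) (n+1) - Pz x (j+2) n := by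
  have := Pz_split x n 0 j
  simpa [Pz] using this

lemma Pz_trace_shift {R : Type*} [CommRing R] (q : ℕ) (x : ℤ → R)
    (hper : ∀ i : ℤ, x (i + (q+2 : ℕ)) = x i) (j : ℤ) :
    Pz x (j+1) (q+2) - Pz x (j+2) q = Pz x j (q+2) - Pz x (j+1) q := by
  have h1 := Pz_left x q j
  have h2 : Pz x (j+1) (q+2) = x j * Pz x (j+1) (q+1) - Pz x (j+1) q := by
    rw [Pz_step, show j + 1 + ((q:ℤ)+1) = j + ((q+2:ℕ):ℤ) by push_cast; ring, hper j]
  rw [h1, h2]; ring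

lemma Pz_trace_const {R : Type*} [CommRing R] (q : ℕ) (x : ℤ → R)
    (hper : ∀ i : ℤ, x (i + (q+2 : ℕ)) = x i) (j : ℤ) :
    Pz x j (q+2) - Pz x (j+1) q = Pz x 0 (q+2) - Pz x 1 q := by
  induction j using Int.induction_on with
  | zero => norm_num
  | succ i ih =>
    rw [show ((i:ℤ)+1) + 1 = (i:ℤ) + 2 by ring, Pz_trace_shift q x hper i, ih]
  | pred i ih =>
    have := Pz_trace_shift q x hper (-(i:ℤ) - 1)
    rw [show (-(i:ℤ)-1) + 1 = -(i:ℤ) by ring, show (-(i:ℤ)-1) + 2 = -(i:ℤ)+1 by ring] at this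
    rw [show -(i:ℤ)-1+1 = -(i:ℤ) by ring, ← this]
    exact ih

lemma key_claim {R : Type*} [CommRing R] (q : ℕ) (x : ℤ → R)
    (hper : ∀ i : ℤ, x (i + (q+2 : ℕ)) = x i) :
    ∀ k : ℕ, ∃ a b : R, ∀ j : ℤ,
      Pz x j ((k+1)*(q+2)) = a * Pz x j (q+2) + b ∧
      Pz x j (k*(q+2) + (q+1)) = a * Pz x j (q+1) := by
  intro k
  induction k with
  | zero =>
    refine ⟨1, 0, fun j => ⟨?_, ?_⟩⟩
    · rw [show (0+1)*(q+2) = q+2 by ring]; ring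
    · rw [show 0*(q+2) + (q+1) = q+1 by ring]; ring
  | succ k ih =>
    obtain ⟨a, b, h⟩ := ih
    refine ⟨a * (Pz x 0 (q+2) - Pz x 1 q) + b, -a, fun j => ⟨?_, ?_⟩⟩
    · -- first component: Pz x j ((k+2)*(q+2))
      have hs := Pz_split x (q+1) (k*(q+2)+(q+1)) j
      rw [show k*(q+2)+(q+1) + (q+1) + 2 = (k+1+1)*(q+2) by ring] at hs
      rw [show k*(q+2)+(q+1)+1 = (k+1)*(q+2) by ring] at hs
      rw [show j + ((k*(q+2)+(q+1) : ℕ) : ℤ) + 1 = j + ((k+1 : ℕ) : ℤ) * ((q+2 : ℕ) : ℤ) by push_cast; ring] at hs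
      rw [show j + ((k*(q+2)+(q+1) : ℕ) : ℤ) + 2 = (j+1) + ((k+1 : ℕ) : ℤ) * ((q+2 : ℕ) : ℤ) by push_cast; ring] at hs
      rw [Pz_per_mul (q+2) x hper (k+1), Pz_per_mul (q+2) x hper (k+1)] at hs
      rw [hs, (h j).1, (h j).2]
      have hdet := Pz_det x q j
      have htr := Pz_trace_const q x hper j
      linear_combination a * Pz x j (q+2) * htr + a * hdet
    · -- second component
      have hs := Pz_split x q (k*(q+2)+(q+1)) j
      rw [show k*(q+2)+(q+1) + q + 2 = (k+1)*(q+2) + (q+1) by ring] at hs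
      rw [show k*(q+2)+(q+1)+1 = (k+1)*(q+2) by ring] at hs
      rw [show j + ((k*(q+2)+(q+1) : ℕ) : ℤ) + 1 = j + ((k+1 : ℕ) : ℤ) * ((q+2 : ℕ) : ℤ) by push_cast; ring] at hs
      rw [show j + ((k*(q+2)+(q+1) : ℕ) : ℤ) + 2 = (j+1) + ((k+1 : ℕ) : ℤ) * ((q+2 : ℕ) : ℤ) by push_cast; ring] at hs
      rw [Pz_per_mul (q+2) x hper (k+1), Pz_per_mul (q+2) x hper (k+1)] at hs
      rw [hs, (h j).1, (h j).2]
      have htr := Pz_trace_const q x hper j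
      linear_combination a * Pz x j (q+1) * htr

/-- The key identity: for a `p`-periodic sequence,
`X_0^{(lp−1)} · X_1^{(p−1)} = X_0^{(p−1)} · X_1^{(lp−1)}`. -/
theorem key_identity {R : Type*} [CommRing R]
    (p : ℕ) (hp : 1 ≤ p) (x : ℤ → R) (hper : ∀ i : ℤ, x (i + p) = x i)
    (l : ℕ) (hl : 1 ≤ l) :
    Pz x 0 (l * p - 1) * Pz x 1 (p - 1) = Pz x 0 (p - 1) * Pz x 1 (l * p - 1) := by
  rcases Nat.lt_or_ge p 2 with hp2 | hp2
  · -- p = 1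
    have hp1 : p = 1 := by omega
    subst hp1
    have h1 : Pz x 1 (l * 1 - 1) = Pz x 0 (l * 1 - 1) := by
      have := Pz_per 1 x hper (l * 1 - 1) 0
      simpa using this
    simp only [Nat.mul_one] at h1 ⊢
    rw [h1]
    simp [Pz]
  · -- p = q + 2
    obtain ⟨q, rfl⟩ : ∃ q, p = q + 2 := ⟨p - 2, by omega⟩
    obtain ⟨k, rfl⟩ : ∃ k, l = k + 1 := ⟨l - 1, by omega⟩
    obtain ⟨a, b, h⟩ := key_claim q x hper k
    rw [show (k+1) * (q+2) - 1 = k*(q+2) + (q+1) by rw [Nat.add_mul, one_mul]; omega,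
      show q + 2 - 1 = q + 1 by omega, (h 0).2, (h 1).2]
    ring
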